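/- Let B ⊆ N^n be finite with 0 ∈ B and f ∈ R[x]_{B+B}. Then sup { λ ∈ R : f − λ ∈ Σ_B } = inf { L_v(f) : v ∈ R^{B+B}, v_0 = 1, L_v(M_B) ⪰ 0 }, where Σ_B is the cone of sums of squares of polynomials supported on B and L_v(M_B) is the moment matrix (v_{β+β'})_{β,β'∈B}. -/

import Mathlib

open MvPolynomial Finset

namespace SOSDual

variable {n : ℕ}

/-- the support set B+B -/
noncomputable def BB (B : Finset (Fin n →₀ ℕ)) : Finset (Fin n →₀ ℕ) :=
  Finset.image (fun p : (Fin n →₀ ℕ) × (Fin n →₀ ℕ) => p.1 + p.2) (B ×ˢ B)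

lemma mem_BB {B : Finset (Fin n →₀ ℕ)} {b b' : Fin n →₀ ℕ} (hb : b ∈ B) (hb' : b' ∈ B) :
    b + b' ∈ BB B :=
  Finset.mem_image.2 ⟨(b, b'), Finset.mem_product.2 ⟨hb, hb'⟩, rfl⟩

/-- the linear functional L_v -/
noncomputable def LB (B : Finset (Fin n →₀ ℕ)) (v : (Fin n →₀ ℕ) → ℝ)
    (p : MvPolynomial (Fin n) ℝ) : ℝ :=
  ∑ γ ∈ BB B, p.coeff γ * v γ

lemma LB_eq_support {B : Finset (Fin n →₀ ℕ)} {v : (Fin n →₀ ℕ) → ℝ}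
    {p : MvPolynomial (Fin n) ℝ} (hp : p.support ⊆ BB B) :
    LB B v p = ∑ γ ∈ p.support, p.coeff γ * v γ := by
  refine (Finset.sum_subset hp fun γ _ hγ => ?_).symm
  simp [MvPolynomial.notMem_support_iff.1 hγ]

lemma LB_sum {B : Finset (Fin n →₀ ℕ)} {v : (Fin n →₀ ℕ) → ℝ} {ι : Type*} (s : Finset ι)
    (p : ι → MvPolynomial (Fin n) ℝ) :
    LB B v (∑ i ∈ s, p i) = ∑ i ∈ s, LB B v (p i) := by
  unfold LB
  rw [Finset.sum_comm]
  simp [MvPolynomial.coeff_sum, Finset.sum_mul]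

lemma LB_monomial {B : Finset (Fin n →₀ ℕ)} {v : (Fin n →₀ ℕ) → ℝ} {γ : Fin n →₀ ℕ}
    (hγ : γ ∈ BB B) (c : ℝ) : LB B v (MvPolynomial.monomial γ c) = c * v γ := by
  unfold LB
  rw [Finset.sum_eq_single γ]
  · simp
  · intro δ _ hδ; simp [MvPolynomial.coeff_monomial, Ne.symm hδ]
  · exact fun h => absurd hγ h

/-- writing a polynomial as sum of monomials over any superset of its support -/
lemma as_sum_superset {B : Finset (Fin n →₀ ℕ)} {g : MvPolynomial (Fin n) ℝ}
    (hg : g.support ⊆ B) : g = ∑ b ∈ B, MvPolynomial.monomial b (g.coeff b) := by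
  rw [← Finset.sum_subset hg (fun b _ hb => by
    simp [MvPolynomial.notMem_support_iff.1 hb])]
  exact (MvPolynomial.support_sum_monomial_coeff g).symm

/-- key expansion of L_v on a square -/
lemma LB_sq {B : Finset (Fin n →₀ ℕ)} {v : (Fin n →₀ ℕ) → ℝ} {g : MvPolynomial (Fin n) ℝ}
    (hg : g.support ⊆ B) :
    LB B v (g ^ 2) = ∑ b ∈ B, ∑ b' ∈ B, g.coeff b * g.coeff b' * v (b + b') := by
  have hrep := as_sum_superset hg
  have hexp : g ^ 2 = ∑ b ∈ B, ∑ b' ∈ B,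
      MvPolynomial.monomial (b + b') (g.coeff b * g.coeff b') := by
    conv_lhs => rw [sq, hrep, Finset.sum_mul_sum]
    simp [MvPolynomial.monomial_mul]
  rw [hexp, LB_sum]
  refine Finset.sum_congr rfl fun b hb => ?_
  rw [LB_sum]
  exact Finset.sum_congr rfl fun b' hb' => LB_monomial (mem_BB hb hb') _



noncomputable def Mmat (B : Finset (Fin n →₀ ℕ)) (v : (Fin n →₀ ℕ) → ℝ) :
    Matrix ↥B ↥B ℝ := Matrix.of fun b b' : ↥B => v (b.1 + b'.1)

lemma quad_eq (B : Finset (Fin n →₀ ℕ)) (v : (Fin n →₀ ℕ) → ℝ) (x : ↥B → ℝ) :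
    dotProduct x ((Mmat B v).mulVec x) = ∑ b : ↥B, ∑ b' : ↥B, x b * x b' * v (b.1 + b'.1) := by
  simp only [dotProduct, Matrix.mulVec, Mmat, Matrix.of_apply, Finset.mul_sum]
  exact Finset.sum_congr rfl fun b _ => Finset.sum_congr rfl fun b' _ => by ring

/-- the polynomial with coefficient vector x on B -/
noncomputable def polyOf (B : Finset (Fin n →₀ ℕ)) (x : ↥B → ℝ) : MvPolynomial (Fin n) ℝ :=
  ∑ b : ↥B, MvPolynomial.monomial b.1 (x b)

lemma polyOf_support (B : Finset (Fin n →₀ ℕ)) (x : ↥B → ℝ) : (polyOf B x).support ⊆ B := by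
  classical
  refine (MvPolynomial.support_sum).trans ?_
  intro γ hγ
  rcases Finset.mem_biUnion.1 hγ with ⟨b, _, hb⟩
  have := MvPolynomial.support_monomial_subset hb
  simp only [Finset.mem_singleton] at this
  simpa [this] using b.2

lemma polyOf_coeff (B : Finset (Fin n →₀ ℕ)) (x : ↥B → ℝ) (b : ↥B) :
    (polyOf B x).coeff b.1 = x b := by
  classical
  unfold polyOf
  rw [MvPolynomial.coeff_sum, Finset.sum_eq_single b]
  · simp
  · intro c _ hc
    rw [MvPolynomial.coeff_monomial, if_neg (fun h => hc (Subtype.ext h))]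
  · simp

lemma sq_nonneg_of_psd {B : Finset (Fin n →₀ ℕ)} {v : (Fin n →₀ ℕ) → ℝ}
    (h : (Mmat B v).PosSemidef) {g : MvPolynomial (Fin n) ℝ} (hg : g.support ⊆ B) :
    0 ≤ LB B v (g ^ 2) := by
  have h2 := h.dotProduct_mulVec_nonneg (fun b : ↥B => g.coeff b.1)
  rw [star_trivial, quad_eq] at h2
  rw [LB_sq hg]
  refine le_trans h2 (le_of_eq ?_)
  rw [← Finset.sum_coe_sort B]
  refine Finset.sum_congr rfl fun b _ => ?_
  rw [← Finset.sum_coe_sort B]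

lemma psd_of_sq_nonneg {B : Finset (Fin n →₀ ℕ)} {v : (Fin n →₀ ℕ) → ℝ}
    (h : ∀ g : MvPolynomial (Fin n) ℝ, g.support ⊆ B → 0 ≤ LB B v (g ^ 2)) :
    (Mmat B v).PosSemidef := by
  refine Matrix.PosSemidef.of_dotProduct_mulVec_nonneg ?_ ?_
  · ext b b'
    simp [Mmat, Matrix.conjTranspose_apply, add_comm]
  · intro x
    rw [star_trivial, quad_eq]
    have := h (polyOf B x) (polyOf_support B x)
    rw [LB_sq (polyOf_support B x)] at this
    refine le_trans this (le_of_eq ?_)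
    rw [← Finset.sum_coe_sort B]
    refine Finset.sum_congr rfl fun b _ => ?_
    rw [← Finset.sum_coe_sort B]
    exact Finset.sum_congr rfl fun b' _ => by rw [polyOf_coeff, polyOf_coeff]

lemma sq_expand {B : Finset (Fin n →₀ ℕ)} {g : MvPolynomial (Fin n) ℝ} (hg : g.support ⊆ B) :
    g ^ 2 = ∑ b ∈ B, ∑ b' ∈ B,
      MvPolynomial.monomial (b + b') (g.coeff b * g.coeff b') := by
  have hrep := as_sum_superset hg
  conv_lhs => rw [sq, hrep, Finset.sum_mul_sum]
  simp [MvPolynomial.monomial_mul]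

lemma coeff_sq {B : Finset (Fin n →₀ ℕ)} {g : MvPolynomial (Fin n) ℝ} (hg : g.support ⊆ B)
    (γ : Fin n →₀ ℕ) : (g ^ 2).coeff γ = ∑ b : ↥B, ∑ b' : ↥B,
      (if (b.1 + b'.1 : Fin n →₀ ℕ) = γ then (1:ℝ) else 0) * (g.coeff b.1 * g.coeff b'.1) := by
  rw [sq_expand hg, ← Finset.sum_coe_sort B]
  rw [MvPolynomial.coeff_sum]
  refine Finset.sum_congr rfl fun b _ => ?_
  rw [← Finset.sum_coe_sort B, MvPolynomial.coeff_sum]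
  refine Finset.sum_congr rfl fun b' _ => ?_
  rw [MvPolynomial.coeff_monomial]
  split_ifs <;> ring

/-- From an SOS decomposition, a PSD Gram matrix -/
lemma exists_gram {B : Finset (Fin n →₀ ℕ)} {t : ℕ} (g : Fin t → MvPolynomial (Fin n) ℝ)
    (hg : ∀ i, (g i).support ⊆ B) :
    ∃ G : Matrix ↥B ↥B ℝ, G.PosSemidef ∧ ∀ γ : Fin n →₀ ℕ,
      (∑ i, g i ^ 2).coeff γ = ∑ b : ↥B, ∑ b' : ↥B,
        (if (b.1 + b'.1 : Fin n →₀ ℕ) = γ then (1:ℝ) else 0) * G b b' := by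
  classical
  set G : Matrix ↥B ↥B ℝ :=
    Matrix.of (fun b b' : ↥B => ∑ i, (g i).coeff b.1 * (g i).coeff b'.1) with hGdef
  have hGapp : ∀ b b' : ↥B, G b b' = ∑ i, (g i).coeff b.1 * (g i).coeff b'.1 :=
    fun b b' => rfl
  refine ⟨G, Matrix.PosSemidef.of_dotProduct_mulVec_nonneg ?_ ?_, ?_⟩
  · ext b b'
    simp only [Matrix.conjTranspose_apply, star_trivial, hGapp]
    exact Finset.sum_congr rfl fun i _ => mul_comm _ _
  · intro x
    rw [star_trivial]
    have e1 : dotProduct x (G.mulVec x)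
        = ∑ b : ↥B, ∑ b' : ↥B, ∑ i : Fin t,
            x b * (g i).coeff b.1 * (x b' * (g i).coeff b'.1) := by
      simp only [dotProduct, Matrix.mulVec, hGapp]
      refine Finset.sum_congr rfl fun b _ => ?_
      rw [Finset.mul_sum]
      refine Finset.sum_congr rfl fun b' _ => ?_
      rw [Finset.sum_mul, Finset.mul_sum]
      exact Finset.sum_congr rfl fun i _ => by ring
    have e2 : (∑ b : ↥B, ∑ b' : ↥B, ∑ i : Fin t,
            x b * (g i).coeff b.1 * (x b' * (g i).coeff b'.1))
        = ∑ i : Fin t, ∑ b : ↥B, ∑ b' : ↥B,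
            x b * (g i).coeff b.1 * (x b' * (g i).coeff b'.1) := by
      exact (Finset.sum_congr rfl fun b _ => Finset.sum_comm).trans Finset.sum_comm
    rw [e1, e2]
    refine Finset.sum_nonneg fun i _ => ?_
    rw [← Finset.sum_mul_sum]
    exact mul_self_nonneg _
  · intro γ
    rw [MvPolynomial.coeff_sum]
    have hco : ∀ i : Fin t, (g i ^ 2).coeff γ = ∑ b : ↥B, ∑ b' : ↥B,
        (if (b.1 + b'.1 : Fin n →₀ ℕ) = γ then (1:ℝ) else 0)
          * ((g i).coeff b.1 * (g i).coeff b'.1) := fun i => coeff_sq (hg i) γ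
    rw [Finset.sum_congr rfl fun i _ => hco i]
    have e2 : (∑ i : Fin t, ∑ b : ↥B, ∑ b' : ↥B,
        (if (b.1 + b'.1 : Fin n →₀ ℕ) = γ then (1:ℝ) else 0)
          * ((g i).coeff b.1 * (g i).coeff b'.1))
        = ∑ b : ↥B, ∑ b' : ↥B, ∑ i : Fin t,
        (if (b.1 + b'.1 : Fin n →₀ ℕ) = γ then (1:ℝ) else 0)
          * ((g i).coeff b.1 * (g i).coeff b'.1) := by
      rw [Finset.sum_comm]
      exact Finset.sum_congr rfl fun b _ => Finset.sum_comm
    rw [e2]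
    refine Finset.sum_congr rfl fun b _ => Finset.sum_congr rfl fun b' _ => ?_
    rw [hGapp, Finset.mul_sum]

/-- From a PSD Gram matrix, an SOS decomposition -/
lemma gram_sos {B : Finset (Fin n →₀ ℕ)} (G : Matrix ↥B ↥B ℝ) (hG : G.PosSemidef) :
    ∃ (t : ℕ) (g : Fin t → MvPolynomial (Fin n) ℝ), (∀ i, (g i).support ⊆ B) ∧
      (∀ γ : Fin n →₀ ℕ, (∑ i, g i ^ 2).coeff γ = ∑ b : ↥B, ∑ b' : ↥B,
        (if (b.1 + b'.1 : Fin n →₀ ℕ) = γ then (1:ℝ) else 0) * G b b') ∧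
      (∀ b b' : ↥B, G b b' = ∑ i, (g i).coeff b.1 * (g i).coeff b'.1) := by
  classical
  obtain ⟨A, hA⟩ : ∃ A : Matrix ↥B ↥B ℝ, G = A.conjTranspose * A := by
    open scoped MatrixOrder in
    exact ⟨CFC.sqrt G, by rw [← Matrix.star_eq_conjTranspose,
      (IsSelfAdjoint.of_nonneg (CFC.sqrt_nonneg G)).star_eq, CFC.sqrt_mul_sqrt_self G hG.nonneg]⟩
  have hGapp : ∀ b b' : ↥B, G b b' = ∑ j : ↥B, A j b * A j b' := by
    intro b b'
    rw [hA]
    simp [Matrix.mul_apply, Matrix.conjTranspose_apply]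
  set e := (Fintype.equivFin ↥B).symm with he
  refine ⟨Fintype.card ↥B, fun i => polyOf B (fun b => A (e i) b), fun i => polyOf_support _ _,
    fun γ => ?_, fun b b' => ?_⟩
  swap
  · rw [hGapp]
    refine (Fintype.sum_equiv e _ _ fun i => ?_).symm
    rw [polyOf_coeff, polyOf_coeff]
  have key : ∀ j : ↥B, ((polyOf B (fun b => A j b)) ^ 2).coeff γ
      = ∑ b : ↥B, ∑ b' : ↥B,
        (if (b.1 + b'.1 : Fin n →₀ ℕ) = γ then (1:ℝ) else 0) * (A j b * A j b') := by
    intro j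
    rw [coeff_sq (polyOf_support B _) γ]
    refine Finset.sum_congr rfl fun b _ => Finset.sum_congr rfl fun b' _ => ?_
    rw [polyOf_coeff, polyOf_coeff]
  rw [MvPolynomial.coeff_sum]
  have e0 : (∑ i : Fin (Fintype.card ↥B), ((polyOf B (fun b => A (e i) b)) ^ 2).coeff γ)
      = ∑ j : ↥B, ((polyOf B (fun b => A j b)) ^ 2).coeff γ :=
    Fintype.sum_equiv e _ _ (fun i => rfl)
  rw [e0, Finset.sum_congr rfl fun j _ => key j]
  have e2 : (∑ j : ↥B, ∑ b : ↥B, ∑ b' : ↥B,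
        (if (b.1 + b'.1 : Fin n →₀ ℕ) = γ then (1:ℝ) else 0) * (A j b * A j b'))
      = ∑ b : ↥B, ∑ b' : ↥B, ∑ j : ↥B,
        (if (b.1 + b'.1 : Fin n →₀ ℕ) = γ then (1:ℝ) else 0) * (A j b * A j b') :=
    (Finset.sum_comm).trans (Finset.sum_congr rfl fun b _ => Finset.sum_comm)
  rw [e2]
  refine Finset.sum_congr rfl fun b _ => Finset.sum_congr rfl fun b' _ => ?_
  rw [hGapp, Finset.mul_sum]
/-- matrices as functions on pairs, to have good norm instances -/
abbrev MatF (B : Finset (Fin n →₀ ℕ)) : Type _ := (↥B × ↥B) → ℝ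

noncomputable def matOf {B : Finset (Fin n →₀ ℕ)} (h : MatF B) : Matrix ↥B ↥B ℝ :=
  Matrix.of fun b b' => h (b, b')

def Pset (B : Finset (Fin n →₀ ℕ)) : Set (MatF B) := {h | (matOf h).PosSemidef}

noncomputable def PhiL (B : Finset (Fin n →₀ ℕ)) : MatF B →ₗ[ℝ] (↥(BB B) → ℝ) where
  toFun h := fun γ => ∑ b : ↥B, ∑ b' : ↥B,
    (if (b.1 + b'.1 : Fin n →₀ ℕ) = γ.1 then (1:ℝ) else 0) * h (b, b')
  map_add' h1 h2 := by
    funext γ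
    simp [mul_add, Finset.sum_add_distrib]
  map_smul' c h := by
    funext γ
    simp only [Pi.smul_apply, smul_eq_mul, RingHom.id_apply, Finset.mul_sum]
    exact Finset.sum_congr rfl fun b _ => Finset.sum_congr rfl fun b' _ => by ring

lemma zero_mem_Pset (B : Finset (Fin n →₀ ℕ)) : (0 : MatF B) ∈ Pset B := by
  refine Matrix.PosSemidef.of_dotProduct_mulVec_nonneg ?_ ?_
  · ext b b'; simp [matOf]
  · intro x; simp [matOf, Matrix.mulVec, dotProduct]

lemma add_mem_Pset {B : Finset (Fin n →₀ ℕ)} {h1 h2 : MatF B}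
    (H1 : h1 ∈ Pset B) (H2 : h2 ∈ Pset B) : h1 + h2 ∈ Pset B := by
  have hm : matOf (h1 + h2) = matOf h1 + matOf h2 := rfl
  refine Matrix.PosSemidef.of_dotProduct_mulVec_nonneg ?_ ?_
  · rw [hm]; exact H1.1.add H2.1
  · intro x
    rw [hm, Matrix.add_mulVec, dotProduct_add]
    exact add_nonneg (H1.dotProduct_mulVec_nonneg x) (H2.dotProduct_mulVec_nonneg x)

lemma smul_mem_Pset {B : Finset (Fin n →₀ ℕ)} {c : ℝ} (hc : 0 ≤ c) {h : MatF B}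
    (H : h ∈ Pset B) : c • h ∈ Pset B := by
  have hm : matOf (c • h) = c • matOf h := rfl
  refine Matrix.PosSemidef.of_dotProduct_mulVec_nonneg ?_ ?_
  · rw [hm]
    ext b b'
    have := congrFun (congrFun H.1 b) b'
    simp only [Matrix.conjTranspose_apply, star_trivial, Matrix.smul_apply, smul_eq_mul]
    simp only [Matrix.conjTranspose_apply, star_trivial] at this
    rw [this]
  · intro x
    rw [hm, Matrix.smul_mulVec, dotProduct_smul]
    exact mul_nonneg hc (H.dotProduct_mulVec_nonneg x)

lemma convex_Pset (B : Finset (Fin n →₀ ℕ)) : Convex ℝ (Pset B) := by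
  intro x hx y hy a b ha hb _
  exact add_mem_Pset (smul_mem_Pset ha hx) (smul_mem_Pset hb hy)

lemma quad_sum_eq {B : Finset (Fin n →₀ ℕ)} (h : MatF B) (x : ↥B → ℝ) :
    dotProduct (star x) ((matOf h).mulVec x)
      = ∑ b : ↥B, ∑ b' : ↥B, x b * h (b, b') * x b' := by
  rw [star_trivial]
  simp only [dotProduct, Matrix.mulVec, matOf, Matrix.of_apply, Finset.mul_sum]
  exact Finset.sum_congr rfl fun b _ => Finset.sum_congr rfl fun b' _ => by ring

lemma isClosed_Pset (B : Finset (Fin n →₀ ℕ)) : IsClosed (Pset B) := by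
  have hset : Pset B = (⋂ (p : ↥B × ↥B), {h : MatF B | h (p.2, p.1) = h p}) ∩
      ⋂ (x : ↥B → ℝ), {h : MatF B | 0 ≤ ∑ b : ↥B, ∑ b' : ↥B, x b * h (b, b') * x b'} := by
    ext h
    constructor
    · intro H
      refine ⟨Set.mem_iInter.2 fun p => ?_, Set.mem_iInter.2 fun x => ?_⟩
      · have := congrFun (congrFun H.1 p.1) p.2
        simpa [matOf, Matrix.conjTranspose_apply] using this
      · show (0:ℝ) ≤ _
        rw [← quad_sum_eq h x]; exact H.dotProduct_mulVec_nonneg x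
    · intro ⟨H1, H2⟩
      refine Matrix.PosSemidef.of_dotProduct_mulVec_nonneg ?_ ?_
      · ext b b'
        have := Set.mem_iInter.1 H1 (b', b)
        simpa [matOf, Matrix.conjTranspose_apply] using this.symm
      · intro x
        rw [quad_sum_eq h x]
        exact Set.mem_iInter.1 H2 x
  rw [hset]
  refine IsClosed.inter (isClosed_iInter fun p => isClosed_eq ?_ ?_)
    (isClosed_iInter fun x => isClosed_le continuous_const ?_)
  · exact continuous_apply _
  · exact continuous_apply _
  · refine continuous_finset_sum _ fun b _ => continuous_finset_sum _ fun b' _ => ?_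
    exact (continuous_const.mul (continuous_apply _)).mul continuous_const

lemma sos_zero {t : ℕ} {g : Fin t → MvPolynomial (Fin n) ℝ}
    (h : ∑ i, g i ^ 2 = 0) (i : Fin t) : g i = 0 := by
  apply MvPolynomial.funext
  intro x
  have hx := congrArg (MvPolynomial.eval x) h
  rw [map_sum, map_zero] at hx
  simp only [map_pow] at hx
  have := (Finset.sum_eq_zero_iff_of_nonneg (fun j _ => sq_nonneg (MvPolynomial.eval x (g j)))).1
    hx i (Finset.mem_univ i)
  rw [map_zero]
  exact pow_eq_zero_iff (by norm_num) |>.1 this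
lemma formula_eq_zero_outside {B : Finset (Fin n →₀ ℕ)} (G : Matrix ↥B ↥B ℝ)
    {γ : Fin n →₀ ℕ} (hγ : γ ∉ BB B) :
    (∑ b : ↥B, ∑ b' : ↥B, (if (b.1 + b'.1 : Fin n →₀ ℕ) = γ then (1:ℝ) else 0) * G b b') = 0 := by
  refine Finset.sum_eq_zero fun b _ => Finset.sum_eq_zero fun b' _ => ?_
  rw [if_neg, zero_mul]
  intro h
  exact hγ (h ▸ mem_BB b.2 b'.2)

lemma Pset_ker {B : Finset (Fin n →₀ ℕ)} {h : MatF B} (hh : h ∈ Pset B)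
    (h0 : PhiL B h = 0) : h = 0 := by
  obtain ⟨t, g, hsupp, hcoeff, hgram⟩ := gram_sos (matOf h) hh
  have hq : (∑ i, g i ^ 2) = 0 := by
    apply MvPolynomial.ext
    intro γ
    rw [MvPolynomial.coeff_zero, hcoeff γ]
    by_cases hγ : γ ∈ BB B
    · have := congrFun h0 (⟨γ, hγ⟩ : ↥(BB B))
      simpa [PhiL, matOf] using this
    · exact formula_eq_zero_outside _ hγ
  funext p
  have : matOf h p.1 p.2 = 0 := by
    rw [hgram]
    refine Finset.sum_eq_zero fun i _ => ?_
    rw [sos_zero hq i]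
    simp
  exact this

lemma isClosed_K (B : Finset (Fin n →₀ ℕ)) : IsClosed (PhiL B '' Pset B) := by
  have hcont : Continuous (PhiL B) := (PhiL B).continuous_of_finiteDimensional
  obtain ⟨c, hcpos, hbound⟩ : ∃ c : ℝ, 0 < c ∧ ∀ h ∈ Pset B, c * ‖h‖ ≤ ‖PhiL B h‖ := by
    by_cases hS : (Pset B ∩ Metric.sphere (0 : MatF B) 1).Nonempty
    · have hcomp : IsCompact (Pset B ∩ Metric.sphere (0 : MatF B) 1) :=
        (isCompact_sphere (0 : MatF B) 1).inter_left (isClosed_Pset B)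
      obtain ⟨h₀, hh₀, hmin'⟩ := hcomp.exists_isMinOn hS (hcont.norm.continuousOn)
      have hmin : ∀ x ∈ Pset B ∩ Metric.sphere (0 : MatF B) 1,
          ‖PhiL B h₀‖ ≤ ‖PhiL B x‖ := fun x hx => hmin' hx
      have hph₀ : PhiL B h₀ ≠ 0 := by
        intro hz
        have := Pset_ker hh₀.1 hz
        rw [this] at hh₀
        have := hh₀.2
        simp at this
      refine ⟨‖PhiL B h₀‖, norm_pos_iff.2 hph₀, fun h hhP => ?_⟩
      rcases eq_or_ne h 0 with rfl | hne
      · simp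
      · have hnorm : (0:ℝ) < ‖h‖ := norm_pos_iff.2 hne
        have hu : ‖h‖⁻¹ • h ∈ Pset B ∩ Metric.sphere (0 : MatF B) 1 := by
          refine ⟨smul_mem_Pset (inv_nonneg.2 hnorm.le) hhP, ?_⟩
          simp [norm_smul, abs_of_pos (inv_pos.2 hnorm), inv_mul_cancel₀ hnorm.ne']
        have := hmin _ hu
        rw [map_smul, norm_smul, norm_inv, norm_norm] at this
        rw [← le_div_iff₀ hnorm]
        rw [div_eq_inv_mul]
        exact this
    · refine ⟨1, one_pos, fun h hhP => ?_⟩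
      rcases eq_or_ne h 0 with rfl | hne
      · simp
      · exfalso
        apply hS
        have hnorm : (0:ℝ) < ‖h‖ := norm_pos_iff.2 hne
        refine ⟨‖h‖⁻¹ • h, smul_mem_Pset (inv_nonneg.2 hnorm.le) hhP, ?_⟩
        simp [norm_smul, abs_of_pos (inv_pos.2 hnorm), inv_mul_cancel₀ hnorm.ne']
  refine IsSeqClosed.isClosed ?_
  intro p p' hp hlim
  choose h hhP hhΦ using hp
  obtain ⟨R, hR⟩ : ∃ R : ℝ, ∀ k : ℕ, ‖p k‖ ≤ R := by
    have := (hlim.norm).bddAbove_range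
    obtain ⟨R, hR⟩ := this
    exact ⟨R, fun k => hR (Set.mem_range_self k)⟩
  have hball : ∀ k, h k ∈ Metric.closedBall (0 : MatF B) (R / c) := by
    intro k
    rw [Metric.mem_closedBall, dist_zero_right]
    rw [le_div_iff₀ hcpos, mul_comm]
    exact le_trans (hbound (h k) (hhP k)) (by rw [hhΦ]; exact hR k)
  obtain ⟨a, ha_ball, φ, hφmono, hφtend⟩ :=
    (isCompact_closedBall (0 : MatF B) (R / c)).tendsto_subseq hball
  have haP : a ∈ Pset B :=
    (isClosed_Pset B).mem_of_tendsto hφtend (Filter.Eventually.of_forall fun k => hhP (φ k))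
  refine ⟨a, haP, ?_⟩
  have h1 : Filter.Tendsto (fun k => PhiL B (h (φ k))) Filter.atTop (nhds (PhiL B a)) :=
    (hcont.continuousAt.tendsto).comp hφtend
  have h2 : Filter.Tendsto (fun k => PhiL B (h (φ k))) Filter.atTop (nhds p') := by
    simp only [hhΦ]
    exact hlim.comp hφmono.tendsto_atTop
  exact tendsto_nhds_unique h1 h2
lemma LB_sub {B : Finset (Fin n →₀ ℕ)} (v : (Fin n →₀ ℕ) → ℝ)
    (p q : MvPolynomial (Fin n) ℝ) : LB B v (p - q) = LB B v p - LB B v q := by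
  simp [LB, MvPolynomial.coeff_sub, sub_mul, Finset.sum_sub_distrib]

lemma LB_C {B : Finset (Fin n →₀ ℕ)} (h0BB : (0 : Fin n →₀ ℕ) ∈ BB B)
    (v : (Fin n →₀ ℕ) → ℝ) (c : ℝ) : LB B v (MvPolynomial.C c) = c * v 0 := by
  rw [show (MvPolynomial.C c : MvPolynomial (Fin n) ℝ) = MvPolynomial.monomial 0 c from
    MvPolynomial.C_apply]
  exact LB_monomial h0BB c

lemma LB_coe_sum {B : Finset (Fin n →₀ ℕ)} (v : (Fin n →₀ ℕ) → ℝ)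
    (p : MvPolynomial (Fin n) ℝ) :
    LB B v p = ∑ γ : ↥(BB B), p.coeff γ.1 * v γ.1 :=
  (Finset.sum_coe_sort (BB B) fun γ => p.coeff γ * v γ).symm

lemma LB_delta0 {B : Finset (Fin n →₀ ℕ)} (h0BB : (0 : Fin n →₀ ℕ) ∈ BB B)
    (p : MvPolynomial (Fin n) ℝ) :
    LB B (fun γ => if γ = 0 then (1:ℝ) else 0) p = p.coeff 0 := by
  unfold LB
  rw [Finset.sum_congr rfl fun γ _ => by rw [mul_ite, mul_one, mul_zero]]
  rw [Finset.sum_ite_eq' (BB B) 0 (fun γ => p.coeff γ), if_pos h0BB]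

lemma coeff_zero_sq (g : MvPolynomial (Fin n) ℝ) : (g ^ 2).coeff 0 = (g.coeff 0) ^ 2 := by
  have := map_pow (MvPolynomial.constantCoeff (σ := Fin n) (R := ℝ)) g 2
  rw [MvPolynomial.constantCoeff_eq] at this
  exact this

/-- the coefficient vector of an SOS polynomial lies in the cone -/
lemma coeffvec_mem_K {B : Finset (Fin n →₀ ℕ)} {t : ℕ} (g : Fin t → MvPolynomial (Fin n) ℝ)
    (hg : ∀ i, (g i).support ⊆ B) :
    (fun γ : ↥(BB B) => (∑ i, g i ^ 2).coeff γ.1) ∈ PhiL B '' Pset B := by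
  obtain ⟨G, hG, hcoeff⟩ := exists_gram g hg
  refine ⟨fun bb => G bb.1 bb.2, ?_, ?_⟩
  · show (matOf _).PosSemidef
    have : matOf (fun bb : ↥B × ↥B => G bb.1 bb.2) = G := rfl
    rw [this]; exact hG
  · funext γ
    exact (hcoeff γ.1).symm

/-- cone membership of the coefficient vector gives an SOS decomposition -/
lemma sos_of_mem_K {B : Finset (Fin n →₀ ℕ)} {q : MvPolynomial (Fin n) ℝ}
    (hq : q.support ⊆ BB B)
    (hK : (fun γ : ↥(BB B) => q.coeff γ.1) ∈ PhiL B '' Pset B) :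
    ∃ (t : ℕ) (g : Fin t → MvPolynomial (Fin n) ℝ),
      (∀ i, (g i).support ⊆ B) ∧ q = ∑ i, g i ^ 2 := by
  obtain ⟨h, hhP, hΦ⟩ := hK
  obtain ⟨t, g, hsupp, hcoeff, -⟩ := gram_sos (matOf h) hhP
  refine ⟨t, g, hsupp, ?_⟩
  apply MvPolynomial.ext
  intro γ
  rw [hcoeff γ]
  by_cases hγ : γ ∈ BB B
  · have := congrFun hΦ (⟨γ, hγ⟩ : ↥(BB B))
    have h2 : PhiL B h ⟨γ, hγ⟩ = ∑ b : ↥B, ∑ b' : ↥B,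
        (if (b.1 + b'.1 : Fin n →₀ ℕ) = γ then (1:ℝ) else 0) * matOf h b b' := rfl
    rw [h2] at this
    rw [← this]
  · rw [formula_eq_zero_outside _ hγ]
    exact MvPolynomial.notMem_support_iff.1 fun hmem => hγ (hq hmem)

/-- decomposition of a continuous linear functional on a finite pi type -/
lemma clm_eq_sum {ι : Type*} [Fintype ι] [DecidableEq ι] (φ : (ι → ℝ) →L[ℝ] ℝ) (x : ι → ℝ) :
    φ x = ∑ i, x i * φ (fun j => if i = j then (1:ℝ) else 0) := by
  conv_lhs => rw [pi_eq_sum_univ x, map_sum]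
  exact Finset.sum_congr rfl fun i _ => by rw [map_smul]; simp
lemma LB_smul_v {B : Finset (Fin n →₀ ℕ)} (a : ℝ) (v : (Fin n →₀ ℕ) → ℝ)
    (p : MvPolynomial (Fin n) ℝ) : LB B (fun γ => a * v γ) p = a * LB B v p := by
  unfold LB
  rw [Finset.mul_sum]
  exact Finset.sum_congr rfl fun γ _ => by ring

lemma LB_add_v {B : Finset (Fin n →₀ ℕ)} (v w : (Fin n →₀ ℕ) → ℝ)
    (p : MvPolynomial (Fin n) ℝ) :
    LB B (fun γ => v γ + w γ) p = LB B v p + LB B w p := by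
  unfold LB
  rw [← Finset.sum_add_distrib]
  exact Finset.sum_congr rfl fun γ _ => by ring

end SOSDual

/-- SOS / moment duality: for finite `B ⊆ ℕⁿ` with `0 ∈ B` and `f ∈ ℝ[x]_{B+B}`,
`sup {λ : f − λ ∈ Σ_B} = inf {L_v(f) : v₀ = 1, L_v(M_B) ⪰ 0}`, where `L_v(M_B)` is the
moment matrix `(v_{β+β'})_{β,β'∈B}`. -/
theorem sos_moment_duality (n : ℕ) (B : Finset (Fin n →₀ ℕ))
    (h0 : (0 : Fin n →₀ ℕ) ∈ B) (f : MvPolynomial (Fin n) ℝ)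
    (hf : f.support ⊆
      Finset.image (fun p : (Fin n →₀ ℕ) × (Fin n →₀ ℕ) => p.1 + p.2) (B ×ˢ B)) :
    sSup {lam : ℝ | ∃ (t : ℕ) (g : Fin t → MvPolynomial (Fin n) ℝ),
        (∀ i, (g i).support ⊆ B) ∧ f - MvPolynomial.C lam = ∑ i, (g i) ^ 2}
      = sInf {r : ℝ | ∃ v : (Fin n →₀ ℕ) → ℝ, v 0 = 1 ∧
          (Matrix.of fun b b' : ↥B => v (b.1 + b'.1)).PosSemidef ∧
          r = ∑ γ ∈ f.support, f.coeff γ * v γ} := by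
  classical
  have h0BB : (0 : Fin n →₀ ℕ) ∈ SOSDual.BB B := by
    simpa using SOSDual.mem_BB h0 h0
  have hf' : f.support ⊆ SOSDual.BB B := hf
  set S : Set ℝ := {lam : ℝ | ∃ (t : ℕ) (g : Fin t → MvPolynomial (Fin n) ℝ),
      (∀ i, (g i).support ⊆ B) ∧ f - MvPolynomial.C lam = ∑ i, (g i) ^ 2} with hSdef
  set T : Set ℝ := {r : ℝ | ∃ v : (Fin n →₀ ℕ) → ℝ, v 0 = 1 ∧
      (Matrix.of fun b b' : ↥B => v (b.1 + b'.1)).PosSemidef ∧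
      r = ∑ γ ∈ f.support, f.coeff γ * v γ} with hTdef
  have hMm : ∀ v : (Fin n →₀ ℕ) → ℝ,
      (Matrix.of fun b b' : ↥B => v (b.1 + b'.1)) = SOSDual.Mmat B v := fun _ => rfl
  -- weak duality
  have hweak : ∀ lam ∈ S, ∀ r ∈ T, lam ≤ r := by
    rintro lam ⟨t, g, hg, hsum⟩ r ⟨v, hv1, hpsd, rfl⟩
    rw [hMm] at hpsd
    have h1 : SOSDual.LB B v (f - MvPolynomial.C lam)
        = SOSDual.LB B v f - lam * v 0 := by
      rw [SOSDual.LB_sub, SOSDual.LB_C h0BB]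
    have h2 : 0 ≤ SOSDual.LB B v (f - MvPolynomial.C lam) := by
      rw [hsum, SOSDual.LB_sum]
      exact Finset.sum_nonneg fun i _ => SOSDual.sq_nonneg_of_psd hpsd (hg i)
    have h3 : SOSDual.LB B v f = ∑ γ ∈ f.support, f.coeff γ * v γ :=
      SOSDual.LB_eq_support hf'
    rw [h1, hv1, mul_one] at h2
    rw [← h3]
    linarith
  -- T is nonempty
  have hTne : T.Nonempty := by
    refine ⟨∑ γ ∈ f.support, f.coeff γ * (if γ = 0 then (1:ℝ) else 0),
      (fun γ => if γ = 0 then (1:ℝ) else 0), by simp, ?_, rfl⟩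
    show (SOSDual.Mmat B (fun γ => if γ = (0 : Fin n →₀ ℕ) then (1:ℝ) else 0)).PosSemidef
    apply SOSDual.psd_of_sq_nonneg
    intro g _
    rw [SOSDual.LB_delta0 h0BB, SOSDual.coeff_zero_sq]
    exact sq_nonneg _
  obtain ⟨r₀, hr₀⟩ := hTne
  have hTne : T.Nonempty := ⟨r₀, hr₀⟩
  have hSbdd : BddAbove S := ⟨r₀, fun lam hlam => hweak lam hlam r₀ hr₀⟩
  by_cases hTb : BddBelow T
  swap
  · -- T unbounded below: both sides are junk value 0
    have hSempty : S = ∅ := by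
      rw [Set.eq_empty_iff_forall_notMem]
      intro lam hlam
      exact hTb ⟨lam, fun r hr => hweak lam hlam r hr⟩
    rw [hSempty, Real.sSup_empty, Real.sInf_of_not_bddBelow hTb]
  · set c := sInf T with hc
    have hKmem : (fun γ : ↥(SOSDual.BB B) => (f - MvPolynomial.C c).coeff γ.1)
        ∈ SOSDual.PhiL B '' SOSDual.Pset B := by
      by_contra hpK
      obtain ⟨φ, u, hsep, hu⟩ := geometric_hahn_banach_closed_point
        ((SOSDual.convex_Pset B).linear_image (SOSDual.PhiL B)) (SOSDual.isClosed_K B) hpK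
      have hu0 : 0 < u := by
        have := hsep 0 ⟨0, SOSDual.zero_mem_Pset B, map_zero _⟩
        simpa using this
      have hKnonpos : ∀ x ∈ SOSDual.PhiL B '' SOSDual.Pset B, φ x ≤ 0 := by
        rintro x ⟨h, hh, rfl⟩
        by_contra hpos
        push_neg at hpos
        have ht0 : 0 ≤ (u + 1) / φ (SOSDual.PhiL B h) := div_nonneg (by linarith) hpos.le
        have hmem : ((u + 1) / φ (SOSDual.PhiL B h)) • h ∈ SOSDual.Pset B :=
          SOSDual.smul_mem_Pset ht0 hh
        have hlt := hsep (SOSDual.PhiL B (((u + 1) / φ (SOSDual.PhiL B h)) • h)) ⟨_, hmem, rfl⟩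
        rw [map_smul, map_smul, smul_eq_mul, div_mul_cancel₀ _ (ne_of_gt hpos)] at hlt
        linarith
      set v : (Fin n →₀ ℕ) → ℝ := fun γ =>
        if hγ : γ ∈ SOSDual.BB B then
          -φ (fun δ : ↥(SOSDual.BB B) =>
            if (⟨γ, hγ⟩ : ↥(SOSDual.BB B)) = δ then (1:ℝ) else 0)
        else 0 with hvdef
      have hφ_eq : ∀ x : ↥(SOSDual.BB B) → ℝ,
          ∑ γ : ↥(SOSDual.BB B), x γ * v γ.1 = -φ x := by
        intro x
        have hterm : ∀ γ : ↥(SOSDual.BB B), x γ * v γ.1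
            = -(x γ * φ (fun δ => if γ = δ then (1:ℝ) else 0)) := by
          intro γ
          rw [hvdef]
          simp only []
          rw [dif_pos γ.2]
          exact (mul_neg _ _).trans rfl
        rw [Finset.sum_congr rfl fun γ _ => hterm γ, SOSDual.clm_eq_sum φ x,
          ← Finset.sum_neg_distrib]
      have hsq : ∀ g : MvPolynomial (Fin n) ℝ, g.support ⊆ B →
          0 ≤ SOSDual.LB B v (g ^ 2) := by
        intro g hg
        have hmem := SOSDual.coeffvec_mem_K (fun _ : Fin 1 => g) (fun _ => hg)
        rw [show (∑ _i : Fin 1, g ^ 2) = g ^ 2 by simp] at hmem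
        have hnonpos := hKnonpos _ hmem
        rw [SOSDual.LB_coe_sum, hφ_eq]
        linarith
      have hv0 : 0 ≤ v 0 := by
        have h1 : ((1 : MvPolynomial (Fin n) ℝ)).support ⊆ B := by
          intro γ hγ
          rw [MvPolynomial.mem_support_iff] at hγ
          by_cases hγ0 : γ = 0
          · subst hγ0; exact h0
          · exact absurd (by rw [MvPolynomial.coeff_one, if_neg (fun h => hγ0 h.symm)]) hγ
        have hpos := hsq 1 h1
        rw [one_pow, show (1 : MvPolynomial (Fin n) ℝ) = MvPolynomial.C 1 from
          (map_one MvPolynomial.C).symm, SOSDual.LB_C h0BB, one_mul] at hpos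
        exact hpos
      have hneg : SOSDual.LB B v f - c * v 0 < 0 := by
        have e1 : SOSDual.LB B v (f - MvPolynomial.C c)
            = -φ (fun γ : ↥(SOSDual.BB B) => (f - MvPolynomial.C c).coeff γ.1) := by
          rw [SOSDual.LB_coe_sum]
          exact hφ_eq _
        have e2 : SOSDual.LB B v (f - MvPolynomial.C c)
            = SOSDual.LB B v f - c * v 0 := by
          rw [SOSDual.LB_sub, SOSDual.LB_C h0BB]
        rw [← e2, e1]
        linarith
      rcases eq_or_lt_of_le hv0 with hv0eq | hv0pos
      · -- v 0 = 0 : T is unbounded below, contradiction with c = sInf T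
        have hLf : SOSDual.LB B v f < 0 := by rw [← hv0eq, mul_zero] at hneg; linarith
        set D := SOSDual.LB B (fun γ => if γ = 0 then (1:ℝ) else 0) f with hD
        set L := SOSDual.LB B v f with hL
        set tt := max ((c - 1 - D) / L) 0 with htt
        have httn : (0:ℝ) ≤ tt := le_max_right _ _
        have htL : tt * L ≤ c - 1 - D := by
          have h1 : (c - 1 - D) / L ≤ tt := le_max_left _ _
          calc tt * L ≤ ((c - 1 - D) / L) * L := mul_le_mul_of_nonpos_right h1 hLf.le
            _ = c - 1 - D := div_mul_cancel₀ _ (ne_of_lt hLf)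
        set w : (Fin n →₀ ℕ) → ℝ := fun γ => (if γ = 0 then (1:ℝ) else 0) + tt * v γ with hw
        have hwval : SOSDual.LB B w f = D + tt * L := by
          rw [hw, SOSDual.LB_add_v, SOSDual.LB_smul_v]
        have hwT : SOSDual.LB B w f ∈ T := by
          refine ⟨w, ?_, ?_, ?_⟩
          · rw [hw]; simp [← hv0eq]
          · rw [hMm]
            apply SOSDual.psd_of_sq_nonneg
            intro g hg
            rw [hw, SOSDual.LB_add_v, SOSDual.LB_smul_v]
            have := hsq g hg
            have h2 : 0 ≤ SOSDual.LB B (fun γ => if γ = 0 then (1:ℝ) else 0) (g^2) := by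
              rw [SOSDual.LB_delta0 h0BB, SOSDual.coeff_zero_sq]
              exact sq_nonneg _
            nlinarith
          · exact SOSDual.LB_eq_support (v := w) hf'
        have hle : c ≤ SOSDual.LB B w f := csInf_le hTb hwT
        rw [hwval] at hle
        linarith
      · -- v 0 > 0 : normalize, get feasible point with value < c
        set w : (Fin n →₀ ℕ) → ℝ := fun γ => (v 0)⁻¹ * v γ with hw
        have hwval : SOSDual.LB B w f = (v 0)⁻¹ * SOSDual.LB B v f := by
          rw [hw, SOSDual.LB_smul_v]
        have hwT : SOSDual.LB B w f ∈ T := by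
          refine ⟨w, ?_, ?_, ?_⟩
          · rw [hw]; exact inv_mul_cancel₀ (ne_of_gt hv0pos)
          · rw [hMm]
            apply SOSDual.psd_of_sq_nonneg
            intro g hg
            rw [hw, SOSDual.LB_smul_v]
            exact mul_nonneg (inv_nonneg.2 hv0pos.le) (hsq g hg)
          · exact SOSDual.LB_eq_support (v := w) hf'
        have hle : c ≤ SOSDual.LB B w f := csInf_le hTb hwT
        have hlt : SOSDual.LB B w f < c := by
          rw [hwval]
          have h1 : (v 0)⁻¹ * SOSDual.LB B v f < (v 0)⁻¹ * (c * v 0) := by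
            apply mul_lt_mul_of_pos_left _ (inv_pos.2 hv0pos)
            linarith
          have h2 : (v 0)⁻¹ * (c * v 0) = c := by
            field_simp
          linarith
        linarith
    -- from cone membership get the SOS decomposition for c
    have hsubf : (f - MvPolynomial.C c).support ⊆ SOSDual.BB B := by
      intro γ hγ
      rw [MvPolynomial.mem_support_iff] at hγ
      by_contra hnot
      apply hγ
      have h1 : f.coeff γ = 0 := MvPolynomial.notMem_support_iff.1 fun hmem => hnot (hf' hmem)
      have h2 : (MvPolynomial.C c : MvPolynomial (Fin n) ℝ).coeff γ = 0 := by
        rw [MvPolynomial.coeff_C, if_neg (fun h => hnot (by rw [← h]; exact h0BB))]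
      rw [MvPolynomial.coeff_sub, h1, h2, sub_zero]
    have hcS : c ∈ S := by
      obtain ⟨t, g, hgsupp, hgsum⟩ := SOSDual.sos_of_mem_K hsubf hKmem
      exact ⟨t, g, hgsupp, hgsum⟩
    refine le_antisymm ?_ ?_
    · exact csSup_le ⟨c, hcS⟩ fun lam hlam => le_csInf hTne fun r hr => hweak lam hlam r hr
    · exact le_csSup hSbdd hcS
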